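/- Let 2 ≤ k ≤ n−1, let J be any k-element subset of {1,…,n}, and let j ∈ {1,…,n}. Then in 𝔅^{({j})}: ∂_j(𝓛_J) = 𝓛^{({j})}_{J∖{j}} if j ∈ J, and ∂_j(𝓛_J) = 0 if j ∉ J. -/

import Mathlib

open Finset

/-- Cyclic successor in `Fin n`. -/
def csucc {n : ℕ} (x : Fin n) : Fin n :=
  ⟨(x.val + 1) % n, Nat.mod_lt _ (Nat.lt_of_le_of_lt (Nat.zero_le _) x.isLt)⟩

/-- Cyclic predecessor in `Fin n`. -/
def cpred {n : ℕ} (x : Fin n) : Fin n :=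
  ⟨(x.val + (n - 1)) % n, Nat.mod_lt _ (Nat.lt_of_le_of_lt (Nat.zero_le _) x.isLt)⟩

/-- The cyclic interval `[i, j]` in `Fin n`. -/
def cInterval {n : ℕ} (i j : Fin n) : Finset (Fin n) :=
  univ.filter fun x => (x - i).val ≤ (j - i).val

/-- `K` is frozen in `S` if its elements are consecutive in the cyclic order induced
on `S` from `(1,2,…,n)`, i.e. `K` is the intersection of `S` with a cyclic interval. -/
def FrozenIn {n : ℕ} (S K : Finset (Fin n)) : Prop :=
  ∃ i j : Fin n, K = S ∩ cInterval i j

instance {n : ℕ} (S K : Finset (Fin n)) : Decidable (FrozenIn S K) :=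
  inferInstanceAs (Decidable (∃ i j : Fin n, K = S ∩ cInterval i j))

/-- The first element of `K` met when reading `j, j+1, j+2, …` cyclically
(`j` itself if `j ∈ K`); junk value `j` if `K = ∅`. -/
def nextIn {n : ℕ} (K : Finset (Fin n)) (j : Fin n) : Fin n :=
  if h : (univ.filter fun r : Fin n => j + r ∈ K).Nonempty then
    j + (univ.filter fun r : Fin n => j + r ∈ K).min' h
  else j

/-- The cyclic predecessor of `x` in `S`: the first element of `S` met when reading
`x−1, x−2, …` cyclically; junk value `x` if `S = ∅`. -/
def prevIn {n : ℕ} (S : Finset (Fin n)) (x : Fin n) : Fin n :=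
  if h : (univ.filter fun r : Fin n => cpred x - r ∈ S).Nonempty then
    cpred x - (univ.filter fun r : Fin n => cpred x - r ∈ S).min' h
  else x

/-- `∂_j(K) = K ∖ {ℓ}`, where `ℓ = j` if `j ∈ K` and otherwise `ℓ` is the first
element of `K` met when reading `j+1, j+2, …` cyclically. -/
def bdSet {n : ℕ} (j : Fin n) (K : Finset (Fin n)) : Finset (Fin n) :=
  K.erase (nextIn K j)

/-- The basis vector `β^{(L)}_K` of the space `𝔅^{(L)}` of formal linear
combinations (modelled inside `ℝ^{Finset (Fin n)}`): the indicator of `K` if `K`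
is nonfrozen in `S = {1,…,n} ∖ L`, and `0` if `K` is frozen. -/
noncomputable def betaV {n : ℕ} (L K : Finset (Fin n)) : Finset (Fin n) → ℝ :=
  if FrozenIn ((univ : Finset (Fin n)) \ L) K then 0 else Pi.single K 1

/-- The `S`-initial points of `K`: elements of `K` whose cyclic predecessor in `S`
does not lie in `K`. -/
def initPts {n : ℕ} (S K : Finset (Fin n)) : Finset (Fin n) :=
  K.filter fun i => prevIn S i ∉ K

/-- `𝓛^{(L)}_K = Σ_{M ∈ {0,1}^t} (−1)^{1+|M|} β^{(L)}_{K_M}`, where `K_M` replaces the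
chosen `S`-initial points of `K` by their cyclic predecessors in `S = {1,…,n} ∖ L`. -/
noncomputable def LElt {n : ℕ} (L K : Finset (Fin n)) : Finset (Fin n) → ℝ :=
  ∑ T ∈ (initPts ((univ : Finset (Fin n)) \ L) K).powerset,
    ((-1 : ℝ) ^ (1 + T.card)) •
      betaV L ((K \ T) ∪ T.image (prevIn ((univ : Finset (Fin n)) \ L)))

/-- The boundary map `∂_j : 𝔅^{(L)} → 𝔅^{(L∪{j})}`, the linear extension of
`β^{(L)}_K ↦ β^{(L∪{j})}_{∂_j(K)}`. -/
noncomputable def bdMap {n : ℕ} (L : Finset (Fin n)) (j : Fin n)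
    (x : Finset (Fin n) → ℝ) : Finset (Fin n) → ℝ :=
  ∑ K : Finset (Fin n), x K • betaV (insert j L) (bdSet j K)

/-- Iterated boundary maps: `bdComp L [j₁, …, jd] x` applies `∂_{j₁}` first (starting
from `𝔅^{(L)}`), then `∂_{j₂}`, etc. -/
noncomputable def bdComp {n : ℕ} :
    Finset (Fin n) → List (Fin n) → (Finset (Fin n) → ℝ) → (Finset (Fin n) → ℝ)
  | _, [], x => x
  | L0, j :: js, x => bdComp (insert j L0) js (bdMap L0 j x)

namespace Stmt12
open Finset
variable {n : ℕ}
open Fin.CommRing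

lemma sub_val_eq [NeZero n] (x y : Fin n) :
    (x - y).val = if y.val ≤ x.val then x.val - y.val else x.val + n - y.val := by
  have hx := x.isLt; have hy := y.isLt
  rw [Fin.sub_def]
  rcases le_or_gt y.val x.val with h | h
  · simp only [if_pos h]
    have e : n - y.val + x.val = (x.val - y.val) + n := by omega
    rw [e, Nat.add_mod_right, Nat.mod_eq_of_lt (by omega)]
  · simp only [if_neg (not_le.mpr h)]
    rw [Nat.mod_eq_of_lt (by omega)]; omega

lemma val_one_f [NeZero n] (hn : 2 ≤ n) : ((1 : Fin n) : ℕ) = 1 := by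
  rw [Fin.val_one']; exact Nat.mod_eq_of_lt (by omega)

lemma val_two_f [NeZero n] (hn : 3 ≤ n) : ((2 : Fin n) : ℕ) = 2 := by
  have e : (2:Fin n) = 1 + 1 := by norm_num
  rw [e, Fin.add_def, Fin.val_mk, val_one_f (by omega), Nat.mod_eq_of_lt (by omega)]

lemma d_inj [NeZero n] {j x y : Fin n} (h : (x - j).val = (y - j).val) : x = y := by
  have h2 : x - j = y - j := Fin.ext h
  have h3 := congrArg (· + j) h2
  simpa [sub_add_cancel] using h3

lemma d_eq_zero [NeZero n] {j x : Fin n} : (x - j).val = 0 ↔ x = j := by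
  constructor
  · intro h
    have h2 : x - j = 0 := Fin.ext (by simpa using h)
    exact sub_eq_zero.mp h2
  · rintro rfl; simp

lemma val_sub_one [NeZero n] (hn : 2 ≤ n) {z : Fin n} (hz : z ≠ 0) : (z - 1).val = z.val - 1 := by
  rw [sub_val_eq, val_one_f hn]
  have : z.val ≠ 0 := fun h => hz (Fin.ext (by simpa using h))
  rw [if_pos (by omega)]

lemma d_sub_one [NeZero n] (hn : 2 ≤ n) {j x : Fin n} (hx : x ≠ j) :
    ((x - 1) - j).val = (x - j).val - 1 ∧ 1 ≤ (x - j).val := by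
  have h0 : x - j ≠ 0 := sub_ne_zero.mpr hx
  have e : (x - 1) - j = (x - j) - 1 := by ring
  rw [e, val_sub_one hn h0]
  have : (x - j).val ≠ 0 := fun h => h0 (Fin.ext (by simpa using h))
  omega

lemma d_add_one [NeZero n] (hn : 2 ≤ n) (j : Fin n) : ((j + 1) - j).val = 1 := by
  rw [add_sub_cancel_left, val_one_f hn]

lemma one_ne_zero_f [NeZero n] (hn : 2 ≤ n) : (1 : Fin n) ≠ 0 := by
  intro h; have := congrArg Fin.val h; rw [val_one_f hn] at this; simp at this

lemma add_one_ne [NeZero n] (hn : 2 ≤ n) (x : Fin n) : x + 1 ≠ x := by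
  intro h
  have h2 : (1 : Fin n) = 0 := by
    have := congrArg (· - x) h; simpa [add_comm, add_sub_cancel_right, sub_self] using this
  exact one_ne_zero_f hn h2

lemma sub_one_ne [NeZero n] (hn : 2 ≤ n) (x : Fin n) : x - 1 ≠ x := by
  intro h; exact add_one_ne hn (x-1) (by rw [sub_add_cancel, h])

lemma two_ne_zero_f [NeZero n] (hn : 3 ≤ n) : (2 : Fin n) ≠ 0 := by
  intro h; have := congrArg Fin.val h; rw [val_two_f hn] at this; simp at this

lemma sub_one_ne_add_one [NeZero n] (hn : 3 ≤ n) (x : Fin n) : x - 1 ≠ x + 1 := by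
  intro h
  have h2 : (2 : Fin n) = 0 := by
    have h3 := congrArg (· - (x - 1)) h
    simp only [sub_self] at h3
    have e : x + 1 - (x - 1) = 2 := by ring
    rw [e] at h3; exact h3.symm
  exact two_ne_zero_f hn h2

lemma d_max [NeZero n] (hn : 2 ≤ n) (j : Fin n) : ((j - 1) - j).val = n - 1 := by
  have e : (j - 1) - j = 0 - 1 := by ring
  have h0 : ((0:Fin n) : ℕ) = 0 := rfl
  rw [e, sub_val_eq, val_one_f hn, h0, if_neg (by omega)]
  omega

lemma sub_val_add [NeZero n] {a b : Fin n} (h : a ≠ b) : (a-b).val + (b-a).val = n := by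
  have hv : a.val ≠ b.val := fun e => h (Fin.ext e)
  have ha := a.isLt; have hb := b.isLt
  rw [sub_val_eq, sub_val_eq]
  split_ifs <;> omega

end Stmt12
namespace Stmt12
open Finset
variable {n : ℕ}

lemma cpred_eq [NeZero n] (hn : 2 ≤ n) (x : Fin n) : cpred x = x - 1 := by
  apply Fin.ext
  rw [sub_val_eq, val_one_f hn]
  show (x.val + (n - 1)) % n = _
  have hx := x.isLt
  rcases le_or_gt 1 x.val with h | h
  · have e : x.val + (n - 1) = (x.val - 1) + n := by omega
    rw [e, Nat.add_mod_right, Nat.mod_eq_of_lt (by omega), if_pos h]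
  · have e : x.val = 0 := by omega
    rw [if_neg (by omega), e, Nat.zero_add, Nat.mod_eq_of_lt (by omega)]
    omega

lemma nextIn_mem [NeZero n] {K : Finset (Fin n)} (hK : K.Nonempty) (j : Fin n) :
    nextIn K j ∈ K := by
  obtain ⟨y, hy⟩ := hK
  have hne : (univ.filter fun r : Fin n => j + r ∈ K).Nonempty :=
    ⟨y - j, by simp [add_comm j (y - j), sub_add_cancel, hy]⟩
  rw [nextIn, dif_pos hne]
  have h := Finset.min'_mem _ hne
  simpa using h

lemma nextIn_min [NeZero n] {K : Finset (Fin n)} {j x : Fin n} (hx : x ∈ K) :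
    (nextIn K j - j).val ≤ (x - j).val := by
  have hne : (univ.filter fun r : Fin n => j + r ∈ K).Nonempty :=
    ⟨x - j, by simp [add_comm j (x - j), sub_add_cancel, hx]⟩
  rw [nextIn, dif_pos hne, add_sub_cancel_left]
  have hmem : x - j ∈ univ.filter fun r : Fin n => j + r ∈ K := by
    simp [add_comm j (x - j), sub_add_cancel, hx]
  exact Fin.le_def.mp (Finset.min'_le _ _ hmem)

lemma nextIn_eq [NeZero n] {K : Finset (Fin n)} {j y : Fin n} (hy : y ∈ K)
    (hmin : ∀ x ∈ K, (y - j).val ≤ (x - j).val) : nextIn K j = y := by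
  have h1 := nextIn_mem ⟨y, hy⟩ j
  have h2 := nextIn_min (j := j) hy
  have h3 := hmin _ h1
  exact d_inj (le_antisymm h2 h3)

lemma nextIn_self [NeZero n] {K : Finset (Fin n)} {j : Fin n} (hj : j ∈ K) :
    nextIn K j = j :=
  nextIn_eq hj (fun x hx => by simp)

lemma prevIn_univ [NeZero n] (hn : 2 ≤ n) (x : Fin n) :
    prevIn (univ : Finset (Fin n)) x = x - 1 := by
  have hne : (univ.filter fun r : Fin n => cpred x - r ∈ (univ : Finset (Fin n))).Nonempty :=
    ⟨0, by simp⟩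
  rw [prevIn, dif_pos hne]
  have hmin : (univ.filter fun r : Fin n => cpred x - r ∈ (univ : Finset (Fin n))).min' hne = 0 := by
    refine le_antisymm (Finset.min'_le _ _ (by simp)) (Fin.le_def.mpr (Nat.zero_le _))
  rw [hmin, sub_zero, cpred_eq hn]

lemma prevIn_ne [NeZero n] (hn : 2 ≤ n) {x jj : Fin n} (h : x - 1 ≠ jj) :
    prevIn ((univ : Finset (Fin n)) \ {jj}) x = x - 1 := by
  have h0 : cpred x - 0 ∈ (univ : Finset (Fin n)) \ {jj} := by
    rw [sub_zero, cpred_eq hn]; simp [h]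
  have hne : (univ.filter fun r : Fin n => cpred x - r ∈ (univ : Finset (Fin n)) \ {jj}).Nonempty :=
    ⟨0, by simpa using h0⟩
  rw [prevIn, dif_pos hne]
  have hmin : (univ.filter fun r : Fin n => cpred x - r ∈ (univ : Finset (Fin n)) \ {jj}).min' hne = 0 := by
    refine le_antisymm (Finset.min'_le _ _ (by simpa using h0)) (Fin.le_def.mpr (Nat.zero_le _))
  rw [hmin, sub_zero, cpred_eq hn]

lemma prevIn_succ [NeZero n] (hn : 3 ≤ n) (j : Fin n) :
    prevIn ((univ : Finset (Fin n)) \ {j}) (j + 1) = j - 1 := by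
  have hc : cpred (j + 1) = j := by rw [cpred_eq (by omega), add_sub_cancel_right]
  have h1 : cpred (j+1) - 1 ∈ (univ : Finset (Fin n)) \ {j} := by
    rw [hc]; simp [sub_one_ne (show 2 ≤ n by omega) j]
  have hne : (univ.filter fun r : Fin n => cpred (j+1) - r ∈ (univ : Finset (Fin n)) \ {j}).Nonempty :=
    ⟨1, by simpa using h1⟩
  rw [prevIn, dif_pos hne]
  have hmin : (univ.filter fun r : Fin n => cpred (j+1) - r ∈ (univ : Finset (Fin n)) \ {j}).min' hne = 1 := by
    refine le_antisymm (Finset.min'_le _ _ (by simpa using h1)) ?_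
    have hm := Finset.min'_mem _ hne
    rw [mem_filter] at hm
    have hm2 : cpred (j+1) - ((univ.filter fun r : Fin n => cpred (j+1) - r ∈ (univ : Finset (Fin n)) \ {j}).min' hne) ≠ j := by
      have h4 := (mem_sdiff.mp hm.2).2
      exact fun h => h4 (mem_singleton.mpr h)
    have hne0 : (univ.filter fun r : Fin n => cpred (j+1) - r ∈ (univ : Finset (Fin n)) \ {j}).min' hne ≠ 0 := by
      intro h0; apply hm2; rw [h0, sub_zero, hc]
    refine Fin.le_def.mpr ?_
    rw [val_one_f (show 2 ≤ n by omega)]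
    have : ((univ.filter fun r : Fin n => cpred (j+1) - r ∈ (univ : Finset (Fin n)) \ {j}).min' hne).val ≠ 0 :=
      fun h0 => hne0 (Fin.ext h0)
    omega
  rw [hmin, hc]

end Stmt12
namespace Stmt12
open Finset
variable {n : ℕ}
open Fin.CommRing

lemma mem_cInterval {u v x : Fin n} : x ∈ cInterval u v ↔ (x - u).val ≤ (v - u).val := by
  simp [cInterval]

lemma frozen_univ_iff {K : Finset (Fin n)} :
    FrozenIn (univ : Finset (Fin n)) K ↔ ∃ u v : Fin n, K = cInterval u v := by
  unfold FrozenIn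
  simp [Finset.univ_inter]

lemma frozen_bdSet [NeZero n] (hn : 2 ≤ n) (j : Fin n) {K : Finset (Fin n)}
    (h : FrozenIn (univ : Finset (Fin n)) K) :
    FrozenIn ((univ : Finset (Fin n)) \ {j}) (bdSet j K) := by
  obtain ⟨u, v, rfl⟩ := frozen_univ_iff.mp h
  by_cases hj : j ∈ cInterval u v
  · rw [bdSet, nextIn_self hj]
    refine ⟨u, v, ?_⟩
    ext x
    simp only [mem_erase, mem_inter, mem_sdiff, mem_univ, true_and, mem_singleton]
    try tauto
  · have hu : u ∈ cInterval u v := mem_cInterval.mpr (by simp)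
    have hjd : (v - u).val < (j - u).val := by
      have := mem_cInterval.not.mp hj; omega
    have hju : j ≠ u := by rintro rfl; exact hj hu
    have hsv := sub_val_add (a := u) (b := j) (fun e => hju e.symm)
    have hmin : ∀ x ∈ cInterval u v, (u - j).val ≤ (x - j).val := by
      intro x hx
      rw [mem_cInterval] at hx
      have h2 : x - j = (x - u) + (u - j) := by ring
      have hlt : (x - u).val + (u - j).val < n := by
        have := (j - u).isLt; omega
      have h3 : ((x - u) + (u - j)).val = (x-u).val + (u-j).val := by
        rw [Fin.add_def]; exact Nat.mod_eq_of_lt hlt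
      rw [h2, h3]; omega
    rw [bdSet, nextIn_eq hu hmin]
    by_cases hD : (v - u).val = 0
    · have hK1 : cInterval u v = {u} := by
        ext x
        rw [mem_cInterval, hD, mem_singleton, Nat.le_zero, d_eq_zero]
      rw [hK1, Finset.erase_singleton]
      refine ⟨j, j, ?_⟩
      ext x
      simp only [notMem_empty, mem_inter, mem_sdiff, mem_univ, true_and, mem_singleton,
        mem_cInterval, false_iff, not_and]
      intro hxj hle
      exact hxj (d_eq_zero.mp (by simpa using hle))
    · refine ⟨u + 1, v, ?_⟩
      have hvu : v - u ≠ 0 := fun e => hD (by rw [e]; rfl)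
      have hv1 : (v - (u+1)).val = (v - u).val - 1 := by
        have e : v - (u + 1) = (v - u) - 1 := by ring
        rw [e, val_sub_one hn hvu]
      have hDn : (v - u).val ≤ n - 2 := by
        have := (j - u).isLt; omega
      ext x
      simp only [mem_erase, mem_inter, mem_sdiff, mem_univ, true_and, mem_singleton,
        mem_cInterval]
      constructor
      · rintro ⟨hxu, hx⟩
        have hxu0 : x - u ≠ 0 := fun e => hxu (sub_eq_zero.mp e)
        have hx1 : (x - (u+1)).val = (x - u).val - 1 := by
          have e : x - (u + 1) = (x - u) - 1 := by ring
          rw [e, val_sub_one hn hxu0]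
        have hxj : ¬ x = j := by
          rintro rfl; omega
        have hge1 : 1 ≤ (x - u).val := by
          have : (x - u).val ≠ 0 := fun h0 => hxu0 (Fin.ext (by simpa using h0))
          omega
        exact ⟨hxj, by omega⟩
      · rintro ⟨hxj, hx⟩
        by_cases hxu : x = u
        · exfalso
          rw [hxu] at hx
          have e : u - (u + 1) = 0 - 1 := by ring
          rw [e] at hx
          have h5 : ((0 - 1 : Fin n)).val = n - 1 := by
            have := d_max hn (0 : Fin n); simpa using this
          omega
        · have hxu0 : x - u ≠ 0 := fun e => hxu (sub_eq_zero.mp e)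
          have hx1 : (x - (u+1)).val = (x - u).val - 1 := by
            have e : x - (u + 1) = (x - u) - 1 := by ring
            rw [e, val_sub_one hn hxu0]
          have hge1 : 1 ≤ (x - u).val := by
            have : (x - u).val ≠ 0 := fun h0 => hxu0 (Fin.ext (by simpa using h0))
            omega
          exact ⟨hxu, by omega⟩

lemma betaV_zero_of_frozen {L A : Finset (Fin n)}
    (h : FrozenIn ((univ : Finset (Fin n)) \ L) A) : betaV L A = 0 := by
  rw [betaV, if_pos h]

end Stmt12
namespace Stmt12
open Finset
variable {n : ℕ}

/-- `K_T`: replace each chosen initial point by its cyclic predecessor. -/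
def KT [NeZero n] (J T : Finset (Fin n)) : Finset (Fin n) :=
  (J \ T) ∪ T.image (fun i => i - 1)

lemma mem_KT [NeZero n] {J T : Finset (Fin n)} {x : Fin n} :
    x ∈ KT J T ↔ (x ∈ J ∧ x ∉ T) ∨ x + 1 ∈ T := by
  simp only [KT, mem_union, mem_sdiff, mem_image]
  apply or_congr_right
  constructor
  · rintro ⟨i, hi, rfl⟩; rwa [sub_add_cancel]
  · intro h; exact ⟨x + 1, h, add_sub_cancel_right x 1⟩

/-- Basic facts about `a = nextIn B j` when `j ∉ B`. -/
lemma nextIn_initpt [NeZero n] (hn : 3 ≤ n) {j : Fin n} {B : Finset (Fin n)}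
    (hjB : j ∉ B) (hBne : B.Nonempty) :
    nextIn B j ∈ B ∧ nextIn B j - 1 ∉ B ∧ nextIn B j ≠ j := by
  have haB : nextIn B j ∈ B := nextIn_mem hBne j
  have haj : nextIn B j ≠ j := fun h => hjB (h ▸ haB)
  refine ⟨haB, ?_, haj⟩
  intro h1
  by_cases hc : nextIn B j = j + 1
  · rw [hc, add_sub_cancel_right] at h1; exact hjB h1
  · obtain ⟨hd1, hd2⟩ := d_sub_one (show 2 ≤ n by omega) haj
    have h2 := nextIn_min (j := j) h1
    have h3 : nextIn B j - 1 ≠ j := by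
      intro h; apply hc
      have h5 := congrArg (· + 1) h
      simpa [sub_add_cancel] using h5
    have h4 : (nextIn B j - 1 - j).val ≠ 0 := fun h0 => h3 (d_eq_zero.mp h0)
    omega

/-- The key pairing lemma: inserting `a = nextIn B j` into `T` does not change
`∂_j(K_T ∪ E)`. -/
lemma pair_bdSet [NeZero n] (hn : 3 ≤ n) {j a : Fin n} {B T E : Finset (Fin n)}
    (hjB : j ∉ B)
    (haB : a ∈ B) (ha1 : a - 1 ∉ B) (haj : a ≠ j)
    (hamin : ∀ x ∈ B, (a - j).val ≤ (x - j).val)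
    (hT : ∀ i ∈ T, i ∈ B ∧ i - 1 ∉ B)
    (hE : ∀ e ∈ E, e = j - 1) (hEB : ∀ e ∈ E, e ∉ B)
    (ha : a ∉ T) :
    bdSet j (KT B T ∪ E) = bdSet j (KT B (insert a T) ∪ E) := by
  have hn2 : 2 ≤ n := by omega
  obtain ⟨hda, hda1⟩ := d_sub_one hn2 haj
  have hjT : j + 1 ∉ T := by
    intro h
    obtain ⟨hB1, -⟩ := hT _ h
    have h2 := hamin _ hB1
    rw [d_add_one hn2] at h2
    have h4 : a = j + 1 := d_inj (by rw [d_add_one hn2]; omega)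
    exact ha (h4 ▸ h)
  have hTb : ∀ x : Fin n, x + 1 ∈ T → (a - j).val - 1 ≤ (x - j).val ∧
      ((x - j).val < (a - j).val → (x - j).val = (a - j).val - 1 ∧ x = a - 1) := by
    intro x hx
    obtain ⟨hxB, -⟩ := hT _ hx
    have hx1j : x + 1 ≠ j := fun h => hjB (h ▸ hxB)
    obtain ⟨he1, he2⟩ := d_sub_one hn2 hx1j
    rw [add_sub_cancel_right] at he1
    have h2 := hamin _ hxB
    refine ⟨by omega, fun hlt => ?_⟩
    have heq : ((x + 1) - j).val = (a - j).val := by omega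
    have hxa : x + 1 = a := d_inj heq
    exact ⟨by omega, by rw [← hxa, add_sub_cancel_right]⟩
  have hEd : ∀ x ∈ E, (x - j).val = n - 1 := by
    intro x hx; rw [hE _ hx]; exact d_max hn2 j
  have hdalt : (a - j).val < n := (a - j).isLt
  have hC1 : nextIn (KT B T ∪ E) j = a := by
    apply nextIn_eq
    · rw [mem_union, mem_KT]; exact Or.inl (Or.inl ⟨haB, ha⟩)
    · intro x hx
      rw [mem_union, mem_KT] at hx
      rcases hx with (⟨h1, -⟩ | h1) | h1
      · exact hamin _ h1
      · obtain ⟨hb1, hb2⟩ := hTb x h1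
        by_contra hcon
        push_neg at hcon
        obtain ⟨hc1, hxa⟩ := hb2 hcon
        rw [hxa, sub_add_cancel] at h1
        exact ha h1
      · have := hEd _ h1; omega
  have hC2 : nextIn (KT B (insert a T) ∪ E) j = a - 1 := by
    apply nextIn_eq
    · rw [mem_union, mem_KT, sub_add_cancel]
      exact Or.inl (Or.inr (mem_insert_self a T))
    · intro x hx
      rw [mem_union, mem_KT] at hx
      rcases hx with (⟨h1, -⟩ | h1) | h1
      · have := hamin _ h1; omega
      · rw [mem_insert] at h1
        rcases h1 with h1 | h1
        · have hxa : x = a - 1 := by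
            have h5 := congrArg (· - 1) h1
            simpa [add_sub_cancel_right] using h5
          rw [hxa]
        · obtain ⟨hb1, -⟩ := hTb x h1; omega
      · have := hEd _ h1; omega
  rw [bdSet, bdSet, hC1, hC2]
  ext x
  simp only [mem_erase, mem_union, mem_KT, mem_insert]
  have FE : ∀ e ∈ E, e ≠ a ∧ e ≠ a - 1 := by
    intro e he
    have h1 := hE _ he
    have h2 := hEB _ he
    refine ⟨fun h => h2 (h ▸ haB), fun h => ?_⟩
    apply haj
    rw [h1] at h
    have h5 := congrArg (· + 1) h
    simpa [sub_add_cancel] using h5.symm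
  have FT : ∀ y : Fin n, y + 1 ∈ T → y ∉ B ∧ y ≠ a ∧ y ≠ a - 1 := by
    intro y hy
    obtain ⟨hyB, hyB2⟩ := hT _ hy
    rw [add_sub_cancel_right] at hyB2
    refine ⟨hyB2, fun h => hyB2 (h ▸ haB), fun h => ?_⟩
    have h5 : y + 1 = a := by
      have h6 := congrArg (· + 1) h
      simpa [sub_add_cancel] using h6
    exact ha (h5 ▸ hy)
  constructor
  · rintro ⟨hxa, (⟨h1, h2⟩ | h1) | h1⟩
    · exact ⟨fun h => ha1 (h ▸ h1), Or.inl (Or.inl ⟨h1, fun hc => hc.elim hxa h2⟩)⟩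
    · obtain ⟨-, -, h3⟩ := FT _ h1
      exact ⟨h3, Or.inl (Or.inr (Or.inr h1))⟩
    · obtain ⟨-, h3⟩ := FE _ h1
      exact ⟨h3, Or.inr h1⟩
  · rintro ⟨hxa1, (⟨h1, h2⟩ | (h1 | h1)) | h1⟩
    · push_neg at h2
      exact ⟨h2.1, Or.inl (Or.inl ⟨h1, h2.2⟩)⟩
    · exfalso; apply hxa1
      have h5 := congrArg (· - 1) h1
      simpa [add_sub_cancel_right] using h5
    · obtain ⟨-, h3, -⟩ := FT _ h1
      exact ⟨h3, Or.inl (Or.inr h1)⟩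
    · obtain ⟨h3, -⟩ := FE _ h1
      exact ⟨h3, Or.inr h1⟩

end Stmt12
namespace Stmt12
open Finset
variable {n : ℕ}

lemma add_one_sub_one [NeZero n] (x : Fin n) : x + 1 - 1 = x := add_sub_cancel_right x 1

lemma eq_sub_of_add_eq [NeZero n] {x y : Fin n} (h : x + 1 = y) : x = y - 1 := by
  have h5 := congrArg (· - 1) h
  simpa [add_sub_cancel_right] using h5

lemma add_eq_of_eq_sub [NeZero n] {x y : Fin n} (h : x = y - 1) : x + 1 = y := by
  rw [h, sub_add_cancel]

/-- Part A computation: if `j ∈ J`, `j ∉ T`, then `∂_j(K_T) = (J∖{j})_T`. -/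
lemma bdSet_KT_of_mem [NeZero n] (hn : 3 ≤ n) {j : Fin n} {J T : Finset (Fin n)}
    (hjJ : j ∈ J) (hjT : j ∉ T) (hT : ∀ i ∈ T, i ∈ J ∧ i - 1 ∉ J) :
    bdSet j (KT J T) = KT (J.erase j) T := by
  have hjK : j ∈ KT J T := mem_KT.mpr (Or.inl ⟨hjJ, hjT⟩)
  rw [bdSet, nextIn_self hjK]
  ext x
  simp only [mem_erase, mem_KT, Finset.mem_erase]
  have hF : x + 1 ∈ T → x ≠ j := by
    intro h hx
    obtain ⟨h1, h2⟩ := hT _ h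
    rw [hx] at h
    obtain ⟨-, h3⟩ := hT _ h
    rw [add_one_sub_one] at h3
    exact h3 hjJ
  constructor
  · rintro ⟨hxj, ⟨h1, h2⟩ | h1⟩
    · exact Or.inl ⟨⟨hxj, h1⟩, h2⟩
    · exact Or.inr h1
  · rintro (⟨⟨hxj, h1⟩, h2⟩ | h1)
    · exact ⟨hxj, Or.inl ⟨h1, h2⟩⟩
    · exact ⟨hF h1, Or.inr h1⟩

/-- Rewriting the `prevIn (univ \ {j})` image as a `- 1` image. -/
lemma KT2_eq [NeZero n] (hn : 2 ≤ n) {j : Fin n} {J' T : Finset (Fin n)}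
    (hT : ∀ i ∈ T, i - 1 ≠ j) :
    (J' \ T) ∪ T.image (prevIn ((univ : Finset (Fin n)) \ {j})) = KT J' T := by
  unfold KT
  congr 1
  apply Finset.image_congr
  intro i hi
  exact prevIn_ne hn (hT i hi)

/-- Case-2 computation: `j ∈ J` an arc start, `j+1 ∈ J`. -/
lemma bdSet_KT_case2 [NeZero n] (hn : 3 ≤ n) {j : Fin n} {J T₀ : Finset (Fin n)}
    (hjJ : j ∈ J) (hp : j - 1 ∉ J) (hs : j + 1 ∈ J)
    (hT : ∀ i ∈ T₀, i ∈ J ∧ i - 1 ∉ J) (hjT : j ∉ T₀) :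
    bdSet j (KT J (insert j T₀)) =
      ((J.erase j) \ (insert (j+1) T₀)) ∪
        (insert (j+1) T₀).image (prevIn ((univ : Finset (Fin n)) \ {j})) := by
  have hn2 : 2 ≤ n := by omega
  have hj1T : j + 1 ∉ T₀ := by
    intro h; obtain ⟨-, h2⟩ := hT _ h; rw [add_one_sub_one] at h2; exact h2 hjJ
  have hj1ins : j + 1 ∉ insert j T₀ := by
    rw [mem_insert]; push_neg; exact ⟨add_one_ne hn2 j, hj1T⟩
  have himg : (insert (j+1) T₀).image (prevIn ((univ : Finset (Fin n)) \ {j}))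
      = insert (j - 1) (T₀.image (fun i => i - 1)) := by
    rw [Finset.image_insert, prevIn_succ hn]
    congr 1
    apply Finset.image_congr
    intro i hi
    exact prevIn_ne hn2 (fun h => (hT i hi).2 (h ▸ hjJ))
  -- nextIn = j + 1
  have hC : nextIn (KT J (insert j T₀)) j = j + 1 := by
    apply nextIn_eq
    · exact mem_KT.mpr (Or.inl ⟨hs, hj1ins⟩)
    · intro x hx
      rw [d_add_one hn2]
      have hxj : x ≠ j := by
        intro hxe
        rw [hxe, mem_KT] at hx
        rcases hx with ⟨-, h2⟩ | h2
        · exact h2 (mem_insert_self j T₀)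
        · exact hj1ins h2
      have : (x - j).val ≠ 0 := fun h0 => hxj (d_eq_zero.mp h0)
      omega
  rw [bdSet, hC, himg]
  ext x
  simp only [mem_erase, mem_KT, mem_insert, mem_union, mem_sdiff]
  have hxT : x + 1 ∈ T₀ → x ≠ j + 1 ∧ x ≠ j := by
    intro h
    obtain ⟨h1, h2⟩ := hT _ h
    constructor
    · rintro rfl; rw [add_one_sub_one] at h2; exact h2 hs
    · rintro rfl; exact hj1T h
  constructor
  · rintro ⟨hxj1, (⟨h1, h2⟩ | h1)⟩
    · push_neg at h2
      exact Or.inl ⟨⟨h2.1, h1⟩, fun hc => hc.elim hxj1 h2.2⟩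
    · rcases h1 with h1 | h1
      · exact Or.inr (Or.inl (eq_sub_of_add_eq h1))
      · exact Or.inr (Or.inr (mem_image.mpr ⟨x+1, h1, add_one_sub_one x⟩))
  · rintro (⟨⟨h1, h2⟩, h3⟩ | h1)
    · push_neg at h3
      exact ⟨h3.1, Or.inl ⟨h2, fun hc => hc.elim h1 h3.2⟩⟩
    · rcases h1 with h1 | h1
      · refine ⟨?_, Or.inr (Or.inl (add_eq_of_eq_sub h1))⟩
        rw [h1]; exact sub_one_ne_add_one hn j
      · rw [mem_image] at h1
        obtain ⟨i, hi, hix⟩ := h1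
        have hix' : x = i - 1 := hix.symm
        have hx1 : x + 1 = i := add_eq_of_eq_sub hix'
        have hmem : x + 1 ∈ T₀ := by rw [hx1]; exact hi
        exact ⟨(hxT hmem).1, Or.inr (Or.inr hmem)⟩

/-- Splitting `K_T` when `j ∈ T`. -/
lemma KT_split [NeZero n] {j : Fin n} {J T : Finset (Fin n)} (hjT : j ∈ T) :
    KT J T = KT (J.erase j) (T.erase j) ∪ {j - 1} := by
  ext x
  simp only [mem_union, mem_KT, mem_erase, mem_singleton]
  constructor
  · rintro (⟨h1, h2⟩ | h1)
    · have hxj : x ≠ j := by rintro rfl; exact h2 hjT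
      exact Or.inl (Or.inl ⟨⟨hxj, h1⟩, fun hc => h2 hc.2⟩)
    · by_cases hx1 : x + 1 = j
      · exact Or.inr (eq_sub_of_add_eq hx1)
      · exact Or.inl (Or.inr ⟨hx1, h1⟩)
  · rintro ((⟨⟨h1, h2⟩, h3⟩ | ⟨h1, h2⟩) | h1)
    · refine Or.inl ⟨h2, fun hc => h3 ⟨h1, hc⟩⟩
    · exact Or.inr h2
    · exact Or.inr (by rw [add_eq_of_eq_sub h1]; exact hjT)

end Stmt12
namespace Stmt12
open Finset
variable {n : ℕ}

/-- The image of a basis vector under the boundary map, as a function. -/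
noncomputable def gfun (j : Fin n) (A : Finset (Fin n)) : Finset (Fin n) → ℝ :=
  if FrozenIn (univ : Finset (Fin n)) A then 0 else betaV {j} (bdSet j A)

lemma gfun_eq [NeZero n] (hn : 2 ≤ n) {j : Fin n} {A A' : Finset (Fin n)}
    (h : bdSet j A = A') : gfun j A = betaV {j} A' := by
  by_cases hf : FrozenIn (univ : Finset (Fin n)) A
  · rw [gfun, if_pos hf]
    have h2 := frozen_bdSet hn j hf
    rw [h] at h2
    rw [betaV_zero_of_frozen h2]
  · rw [gfun, if_neg hf, h]

lemma gfun_congr [NeZero n] (hn : 2 ≤ n) {j : Fin n} {A A' : Finset (Fin n)}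
    (h : bdSet j A = bdSet j A') : gfun j A = gfun j A' :=
  (gfun_eq hn h).trans (gfun_eq hn (rfl : bdSet j A' = bdSet j A')).symm

lemma sum_betaV_smul [NeZero n] (j : Fin n) (A : Finset (Fin n)) :
    ∑ K : Finset (Fin n), betaV ∅ A K • betaV (insert j ∅) (bdSet j K) = gfun j A := by
  have hins : (insert j ∅ : Finset (Fin n)) = {j} := LawfulSingleton.insert_empty_eq j
  have hAe : FrozenIn ((univ : Finset (Fin n)) \ ∅) A ↔ FrozenIn (univ : Finset (Fin n)) A := by
    rw [sdiff_empty]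
  by_cases hA : FrozenIn (univ : Finset (Fin n)) A
  · rw [gfun, if_pos hA]
    have h0 : betaV (∅ : Finset (Fin n)) A = 0 := betaV_zero_of_frozen (hAe.mpr hA)
    refine Finset.sum_eq_zero fun K _ => ?_
    rw [h0]; simp
  · have hbeta : betaV (∅ : Finset (Fin n)) A = Pi.single A 1 := by
      rw [betaV, if_neg (fun h => hA (hAe.mp h))]
    rw [gfun, if_neg hA, hbeta,
      Finset.sum_eq_single_of_mem A (mem_univ A)
        (fun K _ hKA => by rw [Pi.single_eq_of_ne hKA, zero_smul]),
      Pi.single_eq_same, one_smul, hins]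

lemma initPts_univ [NeZero n] (hn : 2 ≤ n) (J : Finset (Fin n)) :
    initPts ((univ : Finset (Fin n)) \ ∅) J = J.filter (fun i => i - 1 ∉ J) := by
  rw [sdiff_empty]
  unfold initPts
  apply Finset.filter_congr
  intro i _
  rw [prevIn_univ hn]

lemma LElt_empty [NeZero n] (hn : 2 ≤ n) (J : Finset (Fin n)) :
    LElt ∅ J = ∑ T ∈ (J.filter (fun i => i - 1 ∉ J)).powerset,
      ((-1 : ℝ) ^ (1 + T.card)) • betaV ∅ (KT J T) := by
  rw [LElt, initPts_univ hn]
  refine Finset.sum_congr rfl fun T hT => ?_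
  have himg : (J \ T) ∪ T.image (prevIn ((univ : Finset (Fin n)) \ ∅)) = KT J T := by
    unfold KT
    congr 1
    apply Finset.image_congr
    intro i _
    rw [sdiff_empty]
    exact prevIn_univ hn i
  rw [himg]

lemma bdMap_LElt [NeZero n] (hn : 2 ≤ n) (j : Fin n) (J : Finset (Fin n)) :
    bdMap ∅ j (LElt ∅ J) = ∑ T ∈ (J.filter (fun i => i - 1 ∉ J)).powerset,
      ((-1 : ℝ) ^ (1 + T.card)) • gfun j (KT J T) := by
  rw [bdMap]
  have hL : ∀ K : Finset (Fin n), LElt ∅ J K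
      = ∑ T ∈ (J.filter (fun i => i - 1 ∉ J)).powerset,
          ((-1 : ℝ) ^ (1 + T.card)) * betaV ∅ (KT J T) K := by
    intro K
    rw [LElt_empty hn, Finset.sum_apply]
    refine Finset.sum_congr rfl fun T _ => ?_
    rw [Pi.smul_apply, smul_eq_mul]
  calc ∑ K : Finset (Fin n), LElt ∅ J K • betaV (insert j ∅) (bdSet j K)
      = ∑ K : Finset (Fin n), ∑ T ∈ (J.filter (fun i => i - 1 ∉ J)).powerset,
          (((-1 : ℝ) ^ (1 + T.card)) * betaV ∅ (KT J T) K) • betaV (insert j ∅) (bdSet j K) := by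
        refine Finset.sum_congr rfl fun K _ => ?_
        rw [hL, Finset.sum_smul]
    _ = ∑ T ∈ (J.filter (fun i => i - 1 ∉ J)).powerset, ∑ K : Finset (Fin n),
          (((-1 : ℝ) ^ (1 + T.card)) * betaV ∅ (KT J T) K) • betaV (insert j ∅) (bdSet j K) :=
        Finset.sum_comm
    _ = ∑ T ∈ (J.filter (fun i => i - 1 ∉ J)).powerset,
          ((-1 : ℝ) ^ (1 + T.card)) • gfun j (KT J T) := by
        refine Finset.sum_congr rfl fun T _ => ?_
        rw [← sum_betaV_smul j (KT J T), Finset.smul_sum]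
        refine Finset.sum_congr rfl fun K _ => ?_
        rw [mul_smul]

/-- Abstract sign-reversing involution: inserting/removing a fixed element `a`. -/
lemma sum_cancel_involution [NeZero n] {a : Fin n} {s : Finset (Finset (Fin n))}
    {v : Finset (Fin n) → (Finset (Fin n) → ℝ)}
    (hmem : ∀ T ∈ s, a ∉ T → insert a T ∈ s)
    (hmem' : ∀ T ∈ s, a ∈ T → T.erase a ∈ s)
    (hv : ∀ T ∈ s, a ∉ T → v T = v (insert a T)) :
    ∑ T ∈ s, ((-1 : ℝ) ^ (1 + T.card)) • v T = 0 := by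
  apply Finset.sum_involution (fun T _ => if a ∈ T then T.erase a else insert a T)
  · intro T hT
    by_cases haT : a ∈ T
    · rw [if_pos haT]
      have h0 := hv (T.erase a) (hmem' T hT haT) (Finset.notMem_erase a T)
      rw [Finset.insert_erase haT] at h0
      rw [← h0]
      have hc : (T.erase a).card = T.card - 1 := Finset.card_erase_of_mem haT
      have hcp : 0 < T.card := Finset.card_pos.mpr ⟨a, haT⟩
      have hsign : ((-1 : ℝ) ^ (1 + T.card)) = -((-1 : ℝ) ^ (1 + (T.erase a).card)) := by
        rw [hc]
        have e : 1 + T.card = (1 + (T.card - 1)) + 1 := by omega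
        rw [e, pow_succ]; ring
      rw [hsign, neg_smul]
      exact neg_add_cancel _
    · rw [if_neg haT]
      rw [← hv T hT haT, Finset.card_insert_of_notMem haT]
      have hsign : ((-1 : ℝ) ^ (1 + (T.card + 1))) = -((-1 : ℝ) ^ (1 + T.card)) := by
        have e : 1 + (T.card + 1) = (1 + T.card) + 1 := by omega
        rw [e, pow_succ]; ring
      rw [hsign, neg_smul]
      exact add_neg_cancel _
  · intro T hT _
    by_cases haT : a ∈ T
    · rw [if_pos haT]; exact Finset.erase_ne_self.mpr haT
    · rw [if_neg haT]; exact Finset.insert_ne_self.mpr haT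
  · intro T hT
    by_cases haT : a ∈ T
    · rw [if_pos haT, if_neg (Finset.notMem_erase a T), Finset.insert_erase haT]
    · rw [if_neg haT, if_pos (Finset.mem_insert_self a T), Finset.erase_insert haT]
  · intro T hT
    by_cases haT : a ∈ T
    · rw [if_pos haT]; exact hmem' T hT haT
    · rw [if_neg haT]; exact hmem T hT haT

end Stmt12
open Stmt12 in
theorem stmt12 {n k : ℕ} (hk : 2 ≤ k) (hkn : k ≤ n - 1)
    (J : Finset (Fin n)) (hJ : J.card = k) (j : Fin n) :
    bdMap ∅ j (LElt ∅ J) = if j ∈ J then LElt {j} (J.erase j) else 0 := by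
  have hn : 3 ≤ n := by
    have : 0 < n := Nat.lt_of_le_of_lt (Nat.zero_le _) j.isLt
    omega
  have hn2 : 2 ≤ n := by omega
  haveI : NeZero n := ⟨by omega⟩
  rw [bdMap_LElt hn2 j J]
  set I : Finset (Fin n) := J.filter (fun i => i - 1 ∉ J) with hI
  have hTI : ∀ T ⊆ I, ∀ i ∈ T, i ∈ J ∧ i - 1 ∉ J := by
    intro T hT i hi
    have h1 := hT hi
    rw [hI, mem_filter] at h1
    exact h1
  by_cases hjJ : j ∈ J
  · -- case j ∈ J
    rw [if_pos hjJ, LElt]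
    set I' : Finset (Fin n) := initPts ((univ : Finset (Fin n)) \ {j}) (J.erase j) with hI'
    -- I.erase j = I'.erase (j+1)
    have hIe : I.erase j = I'.erase (j + 1) := by
      ext i
      rw [Finset.mem_erase, Finset.mem_erase, hI, mem_filter, hI', initPts, mem_filter,
        Finset.mem_erase]
      constructor
      · rintro ⟨hij, hiJ, hi1⟩
        have hij1 : i ≠ j + 1 := by
          intro h; rw [h, add_one_sub_one] at hi1; exact hi1 hjJ
        have hprev : prevIn ((univ : Finset (Fin n)) \ {j}) i = i - 1 :=
          prevIn_ne hn2 (fun h => hi1 (h ▸ hjJ))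
        refine ⟨hij1, ⟨hij, hiJ⟩, ?_⟩
        rw [hprev, Finset.mem_erase]
        rintro ⟨-, hc⟩
        exact hi1 hc
      · rintro ⟨hij1, ⟨hij, hiJ⟩, hnp⟩
        have hi1j : i - 1 ≠ j := fun h => hij1 (by rw [← sub_add_cancel i 1, h])
        have hprev : prevIn ((univ : Finset (Fin n)) \ {j}) i = i - 1 :=
          prevIn_ne hn2 hi1j
        rw [hprev, Finset.mem_erase] at hnp
        exact ⟨hij, hiJ, fun hc => hnp ⟨hi1j, hc⟩⟩
    rw [← Finset.sum_filter_add_sum_filter_not I.powerset (fun T => j ∈ T)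
        (fun T => ((-1 : ℝ) ^ (1 + T.card)) • gfun j (KT J T)),
      ← Finset.sum_filter_add_sum_filter_not I'.powerset (fun T => j + 1 ∈ T)
        (fun T => ((-1 : ℝ) ^ (1 + T.card)) •
          betaV {j} ((J.erase j \ T) ∪ T.image (prevIn ((univ : Finset (Fin n)) \ {j}))))]
    have hPW1 : I.powerset.filter (fun T => ¬ j ∈ T) = (I.erase j).powerset := by
      ext T; simp [Finset.mem_powerset, Finset.subset_erase, and_comm]
    have hPW2 : I'.powerset.filter (fun T => ¬ j + 1 ∈ T) = (I'.erase (j + 1)).powerset := by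
      ext T; simp [Finset.mem_powerset, Finset.subset_erase, and_comm]
    refine congrArg₂ (· + ·) ?_ ?_
    · -- part B : terms with j ∈ T resp. j+1 ∈ T
      by_cases hp : j - 1 ∈ J
      · have e1 : I.powerset.filter (fun T => j ∈ T) = ∅ := by
          rw [Finset.filter_eq_empty_iff]
          intro T hT hjT
          exact (hTI T (Finset.mem_powerset.mp hT) j hjT).2 hp
        have e2 : I'.powerset.filter (fun T => j + 1 ∈ T) = ∅ := by
          rw [Finset.filter_eq_empty_iff]
          intro T hT h
          have h1 := Finset.mem_powerset.mp hT h
          rw [hI', initPts, mem_filter] at h1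
          obtain ⟨-, h2⟩ := h1
          rw [prevIn_succ hn] at h2
          exact h2 (Finset.mem_erase.mpr ⟨sub_one_ne hn2 j, hp⟩)
        rw [e1, e2, Finset.sum_empty, Finset.sum_empty]
      · by_cases hs : j + 1 ∈ J
        · -- case 2 : bijection
          have hj1I' : j + 1 ∈ I' := by
            rw [hI', initPts, mem_filter]
            refine ⟨Finset.mem_erase.mpr ⟨add_one_ne hn2 j, hs⟩, ?_⟩
            rw [prevIn_succ hn]
            exact fun hc => hp (Finset.mem_erase.mp hc).2
          have hjI : j ∈ I := by rw [hI, mem_filter]; exact ⟨hjJ, hp⟩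
          have hj1TJ : ∀ T ⊆ I, j + 1 ∉ T.erase j := by
            intro T hTs h
            have h1 := hTI T hTs _ (Finset.mem_of_mem_erase h)
            rw [add_one_sub_one] at h1
            exact h1.2 hjJ
          apply Finset.sum_nbij' (i := fun T => insert (j + 1) (T.erase j))
            (j := fun T => insert j (T.erase (j + 1)))
          · intro T hT
            rw [mem_filter, Finset.mem_powerset] at hT ⊢
            obtain ⟨hT1, hT2⟩ := hT
            refine ⟨?_, Finset.mem_insert_self _ _⟩
            apply Finset.insert_subset hj1I'
            intro x hx
            have hx1 := Finset.mem_erase.mp hx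
            have h3 : x ∈ I.erase j := Finset.mem_erase.mpr ⟨hx1.1, hT1 hx1.2⟩
            rw [hIe] at h3
            exact (Finset.mem_erase.mp h3).2
          · intro T hT
            rw [mem_filter, Finset.mem_powerset] at hT ⊢
            obtain ⟨hT1, hT2⟩ := hT
            refine ⟨?_, Finset.mem_insert_self _ _⟩
            apply Finset.insert_subset hjI
            intro x hx
            have hx1 := Finset.mem_erase.mp hx
            have h3 : x ∈ I'.erase (j + 1) := Finset.mem_erase.mpr ⟨hx1.1, hT1 hx1.2⟩
            rw [← hIe] at h3
            exact (Finset.mem_erase.mp h3).2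
          · intro T hT
            rw [mem_filter, Finset.mem_powerset] at hT
            rw [Finset.erase_insert (hj1TJ T hT.1), Finset.insert_erase hT.2]
          · intro T hT
            rw [mem_filter, Finset.mem_powerset] at hT
            have hjT : j ∉ T.erase (j + 1) := by
              intro h
              have h1 := hT.1 (Finset.mem_of_mem_erase h)
              rw [hI', initPts, mem_filter] at h1
              exact (Finset.mem_erase.mp h1.1).1 rfl
            rw [Finset.erase_insert hjT, Finset.insert_erase hT.2]
          · intro T hT
            rw [mem_filter, Finset.mem_powerset] at hT
            obtain ⟨hT1, hT2⟩ := hT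
            have hcard : (insert (j + 1) (T.erase j)).card = T.card := by
              rw [Finset.card_insert_of_notMem (hj1TJ T hT1), Finset.card_erase_of_mem hT2]
              have h4 : 0 < T.card := Finset.card_pos.mpr ⟨j, hT2⟩
              omega
            rw [hcard]
            have hKT : KT J T = KT J (insert j (T.erase j)) := by
              rw [Finset.insert_erase hT2]
            have hbd := bdSet_KT_case2 hn hjJ hp hs
              (T₀ := T.erase j)
              (fun i hi => hTI T hT1 i (Finset.mem_of_mem_erase hi))
              (Finset.notMem_erase j T)
            rw [hKT, gfun_eq hn2 hbd]
        · -- case 3 : RHS empty, LHS cancels by involution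
          have e2 : I'.powerset.filter (fun T => j + 1 ∈ T) = ∅ := by
            rw [Finset.filter_eq_empty_iff]
            intro T hT h
            have h1 := Finset.mem_powerset.mp hT h
            rw [hI', initPts, mem_filter] at h1
            exact hs (Finset.mem_of_mem_erase h1.1)
          rw [e2, Finset.sum_empty]
          have hjJ' : j ∉ J.erase j := Finset.notMem_erase j J
          have hJ'ne : (J.erase j).Nonempty := by
            rw [← Finset.card_pos, Finset.card_erase_of_mem hjJ, hJ]; omega
          obtain ⟨haB, ha1, haj⟩ := nextIn_initpt hn hjJ' hJ'ne
          set a := nextIn (J.erase j) j with hadef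
          have haJ : a ∈ J := Finset.mem_of_mem_erase haB
          have ha1j : a - 1 ≠ j := by
            intro h
            have h2 : a = j + 1 := by rw [← sub_add_cancel a 1, h]
            exact hs (h2 ▸ haJ)
          have ha1J : a - 1 ∉ J := fun h => ha1 (Finset.mem_erase.mpr ⟨ha1j, h⟩)
          have haI : a ∈ I := by rw [hI, mem_filter]; exact ⟨haJ, ha1J⟩
          apply sum_cancel_involution (a := a)
          · intro T hT haT
            rw [mem_filter, Finset.mem_powerset] at hT ⊢
            exact ⟨Finset.insert_subset haI hT.1, Finset.mem_insert_of_mem hT.2⟩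
          · intro T hT haT
            rw [mem_filter, Finset.mem_powerset] at hT ⊢
            exact ⟨(Finset.erase_subset _ _).trans hT.1,
              Finset.mem_erase.mpr ⟨fun h => haj h.symm, hT.2⟩⟩
          · intro T hT haT
            rw [mem_filter, Finset.mem_powerset] at hT
            obtain ⟨hTsub, hjT⟩ := hT
            apply gfun_congr hn2
            have hsplit1 : KT J T = KT (J.erase j) (T.erase j) ∪ {j - 1} := KT_split hjT
            have hsplit2 : KT J (insert a T)
                = KT (J.erase j) (insert a (T.erase j)) ∪ {j - 1} := by
              rw [KT_split (Finset.mem_insert_of_mem hjT), Finset.erase_insert_of_ne haj]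
            rw [hsplit1, hsplit2]
            apply pair_bdSet hn hjJ' haB ha1 haj (fun x hx => nextIn_min hx)
            · intro i hi
              obtain ⟨hiJ, hi1⟩ := hTI T hTsub i (Finset.mem_of_mem_erase hi)
              exact ⟨Finset.mem_erase.mpr ⟨(Finset.mem_erase.mp hi).1, hiJ⟩,
                fun hc => hi1 (Finset.mem_of_mem_erase hc)⟩
            · intro e he; exact Finset.mem_singleton.mp he
            · intro e he
              rw [Finset.mem_singleton.mp he]
              exact fun hc => hp (Finset.mem_of_mem_erase hc)
            · exact fun h => haT (Finset.mem_of_mem_erase h)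
    · -- part A : terms with j ∉ T resp. j+1 ∉ T
      rw [hPW1, hPW2, ← hIe]
      refine Finset.sum_congr rfl fun T hT => ?_
      rw [Finset.mem_powerset] at hT
      have hTsub : T ⊆ I := hT.trans (Finset.erase_subset _ _)
      have hjT : j ∉ T := fun h => (Finset.mem_erase.mp (hT h)).1 rfl
      have h1 : bdSet j (KT J T) = KT (J.erase j) T :=
        bdSet_KT_of_mem hn hjJ hjT (hTI T hTsub)
      have h2 : (J.erase j \ T) ∪ T.image (prevIn ((univ : Finset (Fin n)) \ {j}))
          = KT (J.erase j) T :=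
        KT2_eq hn2 (fun i hi h => (hTI T hTsub i hi).2 (h ▸ hjJ))
      rw [h2, gfun_eq hn2 h1]
  · -- case j ∉ J
    rw [if_neg hjJ]
    have hJne : J.Nonempty := by rw [← Finset.card_pos, hJ]; omega
    obtain ⟨haB, ha1, haj⟩ := nextIn_initpt hn hjJ hJne
    set a := nextIn J j with hadef
    have haI : a ∈ I := by rw [hI, mem_filter]; exact ⟨haB, ha1⟩
    apply sum_cancel_involution (a := a)
    · intro T hT haT
      rw [Finset.mem_powerset] at hT ⊢
      exact Finset.insert_subset haI hT
    · intro T hT haT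
      rw [Finset.mem_powerset] at hT ⊢
      exact (Finset.erase_subset _ _).trans hT
    · intro T hT haT
      rw [Finset.mem_powerset] at hT
      apply gfun_congr hn2
      have h0 := pair_bdSet hn hjJ haB ha1 haj (fun x hx => nextIn_min hx) (hTI T hT)
        (E := ∅) (by simp) (by simp) haT
      simpa [Finset.union_empty] using h0
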